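/- Let L : ℝⁿ → ℝ be a non-negative convex function with L(0) = 0 and L(x) > 0 for x ≠ 0. Then L satisfies the Δ₂-condition if and only if sup_{|x| ≥ 1} L′(x, x)/L(x) < ∞, where L′(x, θ) denotes the directional derivative of L at x in direction θ. Equivalently, L satisfies the Δ₂-condition if and only if sup_{|x| ≥ 1} sup_{y ∈ ∂L(x)} ⟨x, y⟩/L(x) < ∞. -/

import Mathlib

/-- The subdifferential of `L` at `x`. -/
def subdiff {n : ℕ} (L : EuclideanSpace ℝ (Fin n) → ℝ) (x : EuclideanSpace ℝ (Fin n)) :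
    Set (EuclideanSpace ℝ (Fin n)) :=
  {y | ∀ z, L x + (inner ℝ y (z - x) : ℝ) ≤ L z}

/-- The directional derivative `L′(x, θ) = inf_{ε > 0} (L(x + εθ) − L(x))/ε`. -/
noncomputable def dirDeriv {n : ℕ} (L : EuclideanSpace ℝ (Fin n) → ℝ)
    (x θ : EuclideanSpace ℝ (Fin n)) : ℝ :=
  sInf ((fun ε : ℝ => (L (x + ε • θ) - L x) / ε) '' Set.Ioi 0)

open Set

namespace D2Aux

open Pointwise

variable {n : ℕ} {L : EuclideanSpace ℝ (Fin n) → ℝ}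

/-- difference quotient -/
noncomputable def Q (L : EuclideanSpace ℝ (Fin n) → ℝ) (x θ : EuclideanSpace ℝ (Fin n))
    (ε : ℝ) : ℝ :=
  (L (x + ε • θ) - L x) / ε

lemma dirDeriv_eq (L : EuclideanSpace ℝ (Fin n) → ℝ) (x θ : EuclideanSpace ℝ (Fin n)) :
    dirDeriv L x θ = sInf (Q L x θ '' Set.Ioi 0) := rfl

lemma Q_mono (hconv : ConvexOn ℝ Set.univ L) (x θ : EuclideanSpace ℝ (Fin n)) {δ δ' : ℝ}
    (h0 : 0 < δ) (h : δ ≤ δ') : Q L x θ δ ≤ Q L x θ δ' := by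
  have h0' : 0 < δ' := h0.trans_le h
  have hb : (δ/δ') * δ' = δ := div_mul_cancel₀ _ h0'.ne'
  have hpt : (1 - δ/δ') • x + (δ/δ') • (x + δ' • θ) = x + δ • θ := by
    rw [smul_add, smul_smul, hb, sub_smul, one_smul]; abel
  have ha : (0:ℝ) ≤ 1 - δ/δ' := by
    rw [sub_nonneg]; exact div_le_one_of_le₀ h h0'.le
  have hb2 : (0:ℝ) ≤ δ/δ' := by positivity
  have hab : (1 - δ/δ') + δ/δ' = 1 := by ring
  have key := hconv.2 (mem_univ x) (mem_univ (x + δ' • θ)) ha hb2 hab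
  rw [hpt, smul_eq_mul, smul_eq_mul] at key
  have h1 : 1 - δ/δ' = (δ' - δ)/δ' := by field_simp
  rw [h1, div_mul_eq_mul_div, div_mul_eq_mul_div, ← add_div, le_div_iff₀ h0'] at key
  rw [Q, Q, div_le_div_iff₀ h0 h0']
  nlinarith [key]

lemma Q_add_neg_nonneg (hconv : ConvexOn ℝ Set.univ L) (x θ : EuclideanSpace ℝ (Fin n)) {ε : ℝ}
    (hε : 0 < ε) : 0 ≤ Q L x θ ε + Q L x (-θ) ε := by
  have hpt : (1/2 : ℝ) • (x + ε • θ) + (1/2 : ℝ) • (x + ε • (-θ)) = x := by module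
  have ha : (0:ℝ) ≤ 1/2 := by norm_num
  have hab : (1/2 : ℝ) + 1/2 = 1 := by norm_num
  have key := hconv.2 (mem_univ (x + ε • θ)) (mem_univ (x + ε • (-θ))) ha ha hab
  rw [hpt, smul_eq_mul, smul_eq_mul] at key
  rw [Q, Q, ← add_div]
  apply div_nonneg _ hε.le
  linarith

lemma bddBelow_Q (hconv : ConvexOn ℝ Set.univ L) (x θ : EuclideanSpace ℝ (Fin n)) :
    BddBelow (Q L x θ '' Set.Ioi 0) := by
  refine ⟨min (Q L x θ 1) (-(Q L x (-θ) 1)), ?_⟩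
  rintro _ ⟨ε, hε, rfl⟩
  rw [mem_Ioi] at hε
  rcases le_total 1 ε with h1 | h1
  · exact le_trans (min_le_left _ _) (Q_mono hconv x θ one_pos h1)
  · refine le_trans (min_le_right _ _) ?_
    have h2 := Q_add_neg_nonneg hconv x θ hε
    have h3 := Q_mono hconv x (-θ) hε h1
    linarith

lemma dirDeriv_le_Q (hconv : ConvexOn ℝ Set.univ L) (x θ : EuclideanSpace ℝ (Fin n)) {ε : ℝ}
    (hε : 0 < ε) : dirDeriv L x θ ≤ Q L x θ ε := by
  rw [dirDeriv_eq]
  exact csInf_le (bddBelow_Q hconv x θ) ⟨ε, hε, rfl⟩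

lemma le_dirDeriv (x θ : EuclideanSpace ℝ (Fin n)) {c : ℝ}
    (h : ∀ ε : ℝ, 0 < ε → c ≤ Q L x θ ε) : c ≤ dirDeriv L x θ := by
  rw [dirDeriv_eq]
  refine le_csInf ⟨_, Set.mem_image_of_mem _ (Set.mem_Ioi.2 one_pos)⟩ ?_
  rintro _ ⟨ε, hε, rfl⟩
  exact h ε hε

lemma left_slope_le_Q (hconv : ConvexOn ℝ Set.univ L) (x θ : EuclideanSpace ℝ (Fin n))
    {s ε : ℝ} (hs : 0 < s) (hε : 0 < ε) :
    (L x - L (x - s • θ)) / s ≤ Q L x θ ε := by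
  have hse : (0:ℝ) < s + ε := by linarith
  have hpt : (ε/(s+ε)) • (x - s • θ) + (s/(s+ε)) • (x + ε • θ) = x := by
    match_scalars <;> (field_simp; try ring)
  have ha : (0:ℝ) ≤ ε/(s+ε) := by positivity
  have hb : (0:ℝ) ≤ s/(s+ε) := by positivity
  have hab : ε/(s+ε) + s/(s+ε) = 1 := by field_simp; ring
  have key := hconv.2 (mem_univ (x - s • θ)) (mem_univ (x + ε • θ)) ha hb hab
  rw [hpt, smul_eq_mul, smul_eq_mul, div_mul_eq_mul_div, div_mul_eq_mul_div, ← add_div,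
    le_div_iff₀ hse] at key
  rw [Q, div_le_div_iff₀ hs hε]
  nlinarith [key]

lemma left_slope_le_dirDeriv (hconv : ConvexOn ℝ Set.univ L) (x θ : EuclideanSpace ℝ (Fin n))
    {s : ℝ} (hs : 0 < s) :
    (L x - L (x - s • θ)) / s ≤ dirDeriv L x θ :=
  le_dirDeriv x θ fun ε hε => left_slope_le_Q hconv x θ hs hε

/-- The key step inequality. -/
lemma step (hconv : ConvexOn ℝ Set.univ L) (z : EuclideanSpace ℝ (Fin n)) {s : ℝ} (hs : 0 < s) :
    L z - L ((1 - s) • z) ≤ s * dirDeriv L z z := by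
  have h := left_slope_le_dirDeriv hconv z z hs
  have hz : z - s • z = (1 - s) • z := by module
  rw [hz, div_le_iff₀ hs] at h
  linarith [h]

lemma Q_add_le (hconv : ConvexOn ℝ Set.univ L) (x θ₁ θ₂ : EuclideanSpace ℝ (Fin n))
    {δ : ℝ} (hδ : 0 < δ) :
    Q L x (θ₁ + θ₂) (δ/2) ≤ Q L x θ₁ δ + Q L x θ₂ δ := by
  have hpt : (1/2 : ℝ) • (x + δ • θ₁) + (1/2 : ℝ) • (x + δ • θ₂) = x + (δ/2) • (θ₁ + θ₂) := by
    module
  have ha : (0:ℝ) ≤ 1/2 := by norm_num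
  have hab : (1/2 : ℝ) + 1/2 = 1 := by norm_num
  have key := hconv.2 (mem_univ (x + δ • θ₁)) (mem_univ (x + δ • θ₂)) ha ha hab
  rw [hpt, smul_eq_mul, smul_eq_mul] at key
  rw [Q, Q, Q, ← add_div, div_le_div_iff₀ (by linarith) hδ]
  nlinarith [key]

lemma dirDeriv_zero (x : EuclideanSpace ℝ (Fin n)) : dirDeriv L x 0 = 0 := by
  have hQ : ∀ ε : ℝ, Q L x 0 ε = 0 := by
    intro ε; simp [Q]
  apply le_antisymm
  · rw [dirDeriv_eq]
    refine csInf_le ⟨0, ?_⟩ ⟨1, Set.mem_Ioi.2 one_pos, hQ 1⟩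
    rintro _ ⟨ε, hε, rfl⟩
    rw [hQ]
  · exact le_dirDeriv x 0 fun ε hε => (hQ ε).ge

lemma dirDeriv_smul (x θ : EuclideanSpace ℝ (Fin n)) {c : ℝ} (hc : 0 < c) :
    dirDeriv L x (c • θ) = c * dirDeriv L x θ := by
  have hset : Q L x (c • θ) '' Set.Ioi 0 = (fun r => c * r) '' (Q L x θ '' Set.Ioi 0) := by
    ext v
    constructor
    · rintro ⟨ε, hε, rfl⟩
      rw [mem_Ioi] at hε
      refine ⟨Q L x θ (ε * c), ⟨ε * c, Set.mem_Ioi.2 (by positivity), rfl⟩, ?_⟩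
      rw [Q, Q]
      have : ε • (c • θ) = (ε * c) • θ := by module
      rw [this]
      field_simp
    · rintro ⟨_, ⟨δ, hδ, rfl⟩, rfl⟩
      rw [mem_Ioi] at hδ
      refine ⟨δ / c, Set.mem_Ioi.2 (by positivity), ?_⟩
      rw [Q, Q]
      have : (δ / c) • (c • θ) = δ • θ := by
        rw [smul_smul, div_mul_cancel₀ _ hc.ne']
      rw [this]
      field_simp
  have hss : (fun r : ℝ => c * r) '' (Q L x θ '' Set.Ioi 0) = c • (Q L x θ '' Set.Ioi 0) := by
    rw [← Set.image_smul]
    simp only [smul_eq_mul]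
  rw [dirDeriv_eq, dirDeriv_eq, hset, hss, Real.sInf_smul_of_nonneg hc.le, smul_eq_mul]

lemma dirDeriv_add_le (hconv : ConvexOn ℝ Set.univ L) (x θ₁ θ₂ : EuclideanSpace ℝ (Fin n)) :
    dirDeriv L x (θ₁ + θ₂) ≤ dirDeriv L x θ₁ + dirDeriv L x θ₂ := by
  refine le_of_forall_pos_le_add fun ε' hε' => ?_
  have hne : ∀ θ : EuclideanSpace ℝ (Fin n), (Q L x θ '' Set.Ioi 0).Nonempty :=
    fun θ => ⟨_, Set.mem_image_of_mem _ (Set.mem_Ioi.2 one_pos)⟩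
  have h1 : sInf (Q L x θ₁ '' Set.Ioi 0) < dirDeriv L x θ₁ + ε' / 2 := by
    rw [dirDeriv_eq]; linarith [half_pos hε']
  have h2 : sInf (Q L x θ₂ '' Set.Ioi 0) < dirDeriv L x θ₂ + ε' / 2 := by
    rw [dirDeriv_eq]; linarith [half_pos hε']
  obtain ⟨_, ⟨δ₁, hδ₁, rfl⟩, hq1⟩ := exists_lt_of_csInf_lt (hne θ₁) h1
  obtain ⟨_, ⟨δ₂, hδ₂, rfl⟩, hq2⟩ := exists_lt_of_csInf_lt (hne θ₂) h2
  rw [mem_Ioi] at hδ₁ hδ₂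
  set δ := min δ₁ δ₂ with hδdef
  have hδ : 0 < δ := lt_min hδ₁ hδ₂
  have key : dirDeriv L x (θ₁ + θ₂) ≤ Q L x θ₁ δ + Q L x θ₂ δ :=
    (dirDeriv_le_Q hconv x (θ₁ + θ₂) (half_pos hδ)).trans (Q_add_le hconv x θ₁ θ₂ hδ)
  have m1 : Q L x θ₁ δ ≤ Q L x θ₁ δ₁ := Q_mono hconv x θ₁ hδ (min_le_left _ _)
  have m2 : Q L x θ₂ δ ≤ Q L x θ₂ δ₂ := Q_mono hconv x θ₂ hδ (min_le_right _ _)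
  linarith

/-- Existence of a subgradient attaining the directional derivative. -/
lemma exists_subgradient (hconv : ConvexOn ℝ Set.univ L) (x : EuclideanSpace ℝ (Fin n))
    (hx0 : x ≠ 0) : ∃ y ∈ subdiff L x, (inner ℝ x y : ℝ) = dirDeriv L x x := by
  set N : EuclideanSpace ℝ (Fin n) → ℝ := dirDeriv L x with hN
  have N_hom : ∀ c : ℝ, 0 < c → ∀ θ, N (c • θ) = c * N θ := fun c hc θ => dirDeriv_smul x θ hc
  have N_add : ∀ θ₁ θ₂, N (θ₁ + θ₂) ≤ N θ₁ + N θ₂ := fun θ₁ θ₂ => dirDeriv_add_le hconv x θ₁ θ₂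
  have N_negpair : ∀ θ, 0 ≤ N θ + N (-θ) := by
    intro θ
    have := N_add θ (-θ)
    simp only [add_neg_cancel] at this
    rw [hN, dirDeriv_zero] at this
    linarith
  have hfle : ∀ z : (LinearPMap.mkSpanSingleton (K := ℝ) (L := ℝ) (σ := RingHom.id ℝ) x (N x) hx0).domain,
      (LinearPMap.mkSpanSingleton (K := ℝ) (L := ℝ) (σ := RingHom.id ℝ) x (N x) hx0) z ≤ N (z : EuclideanSpace ℝ (Fin n)) := by
    rintro ⟨z, hz⟩
    obtain ⟨c, rfl⟩ := Submodule.mem_span_singleton.1 hz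
    rw [LinearPMap.mkSpanSingleton'_apply, smul_eq_mul]
    show c * N x ≤ N (c • x)
    rcases lt_trichotomy c 0 with hc | hc | hc
    · have hcx : c • x = (-c) • (-x) := by module
      rw [hcx, N_hom (-c) (by linarith) (-x)]
      nlinarith [N_negpair x]
    · subst hc
      rw [zero_smul, hN, dirDeriv_zero, zero_mul]
    · rw [N_hom c hc]
  obtain ⟨g, hg1, hg2⟩ := exists_extension_of_le_sublinear
    (LinearPMap.mkSpanSingleton (K := ℝ) (L := ℝ) (σ := RingHom.id ℝ) x (N x) hx0) N N_hom N_add hfle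
  have hgx : g x = N x := by
    have h := hg1 ⟨x, Submodule.mem_span_singleton_self x⟩
    rwa [LinearPMap.mkSpanSingleton_apply] at h
  set G := LinearMap.toContinuousLinearMap g with hG
  set y := (InnerProductSpace.toDual ℝ (EuclideanSpace ℝ (Fin n))).symm G with hy
  have hyinner : ∀ w, (inner ℝ y w : ℝ) = g w := by
    intro w
    rw [hy, InnerProductSpace.toDual_symm_apply]
    rfl
  refine ⟨y, ?_, ?_⟩
  · intro z
    have h1 : (inner ℝ y (z - x) : ℝ) = g (z - x) := hyinner (z - x)
    have h2 : g (z - x) ≤ N (z - x) := hg2 (z - x)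
    have h3 : N (z - x) ≤ Q L x (z - x) 1 := dirDeriv_le_Q hconv x (z - x) one_pos
    have h4 : Q L x (z - x) 1 = L z - L x := by
      rw [Q, one_smul, add_sub_cancel, div_one]
    rw [h1]
    linarith
  · rw [real_inner_comm, hyinner, hgx]

end D2Aux

open D2Aux

theorem stmt7 {n : ℕ} (L : EuclideanSpace ℝ (Fin n) → ℝ) (hconv : ConvexOn ℝ Set.univ L)
    (hnonneg : ∀ x, 0 ≤ L x) (h0 : L 0 = 0) (hpos : ∀ x, x ≠ 0 → 0 < L x) :
    ((∃ C : ℝ, ∀ x : EuclideanSpace ℝ (Fin n), 1 ≤ ‖x‖ → L ((2 : ℝ) • x) ≤ C * L x) ↔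
      (∃ M : ℝ, ∀ x : EuclideanSpace ℝ (Fin n), 1 ≤ ‖x‖ → dirDeriv L x x / L x ≤ M)) ∧
    ((∃ C : ℝ, ∀ x : EuclideanSpace ℝ (Fin n), 1 ≤ ‖x‖ → L ((2 : ℝ) • x) ≤ C * L x) ↔
      (∃ M : ℝ, ∀ x : EuclideanSpace ℝ (Fin n), 1 ≤ ‖x‖ →
        ∀ y ∈ subdiff L x, (inner ℝ x y : ℝ) / L x ≤ M)) := by
  -- positivity of L on the region
  have hLpos : ∀ x : EuclideanSpace ℝ (Fin n), 1 ≤ ‖x‖ → 0 < L x := by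
    intro x hx
    exact hpos x (by intro h; rw [h, norm_zero] at hx; linarith)
  -- Δ₂ implies the directional derivative bound
  have fwd : ∀ C : ℝ, (∀ x : EuclideanSpace ℝ (Fin n), 1 ≤ ‖x‖ → L ((2 : ℝ) • x) ≤ C * L x) →
      ∀ x : EuclideanSpace ℝ (Fin n), 1 ≤ ‖x‖ → dirDeriv L x x / L x ≤ C - 1 := by
    intro C hC x hx
    have hLx := hLpos x hx
    have h1 : dirDeriv L x x ≤ Q L x x 1 := dirDeriv_le_Q hconv x x one_pos
    have h2 : Q L x x 1 = L ((2:ℝ) • x) - L x := by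
      rw [Q, div_one]
      congr 2
      module
    rw [div_le_iff₀ hLx]
    have := hC x hx
    linarith
  -- the directional derivative bound implies Δ₂
  have bwd : ∀ M : ℝ, (∀ x : EuclideanSpace ℝ (Fin n), 1 ≤ ‖x‖ → dirDeriv L x x ≤ M * L x) →
      ∃ C : ℝ, ∀ x : EuclideanSpace ℝ (Fin n), 1 ≤ ‖x‖ → L ((2 : ℝ) • x) ≤ C * L x := by
    intro M hM
    set M' : ℝ := max M 0 with hM'def
    have hM'0 : 0 ≤ M' := le_max_right _ _
    have hd : ∀ x : EuclideanSpace ℝ (Fin n), 1 ≤ ‖x‖ → dirDeriv L x x ≤ M' * L x := by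
      intro x hx
      exact (hM x hx).trans (mul_le_mul_of_nonneg_right (le_max_left _ _) (hLpos x hx).le)
    set k : ℕ := ⌈2 * M'⌉₊ + 1 with hkdef
    have hk0 : (0:ℝ) < k := by positivity
    have hk : 2 * M' ≤ k := by
      calc 2 * M' ≤ (⌈2 * M'⌉₊ : ℝ) := Nat.le_ceil _
        _ ≤ k := by push_cast [hkdef]; linarith
    refine ⟨2 ^ k, ?_⟩
    intro x hx
    have key : ∀ i : ℕ, i ≤ k → L ((1 + (i:ℝ)/k) • x) ≤ 2 ^ i * L x := by
      intro i
      induction i with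
      | zero =>
        intro _
        norm_num
      | succ i ih =>
        intro hik
        rw [Nat.cast_add, Nat.cast_one]
        have hik' : i ≤ k := by omega
        set t : ℝ := 1 + ((i:ℝ) + 1)/k with htdef
        have ht1 : (1:ℝ) ≤ t := by
          rw [htdef]
          have : (0:ℝ) ≤ ((i:ℝ)+1)/k := by positivity
          linarith
        have ht0 : (0:ℝ) < t := by linarith
        set z : EuclideanSpace ℝ (Fin n) := t • x with hzdef
        have hz1 : 1 ≤ ‖z‖ := by
          rw [hzdef, norm_smul, Real.norm_eq_abs, abs_of_pos ht0]
          nlinarith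
        set s : ℝ := (1/(k:ℝ))/t with hsdef
        have hs0 : 0 < s := by rw [hsdef]; positivity
        have hsk : s ≤ 1/(k:ℝ) := by
          have h1k : (0:ℝ) < 1/(k:ℝ) := by positivity
          rw [hsdef, div_le_iff₀ ht0]
          nlinarith [mul_le_mul_of_nonneg_left ht1 h1k.le]
        have hprev : (1 - s) • z = (1 + (i:ℝ)/k) • x := by
          rw [hzdef, smul_smul]
          congr 1
          rw [hsdef, htdef]
          field_simp
          ring
        have hstep := step hconv z hs0
        have hdz := hd z hz1
        have hsM : s * M' ≤ 1/2 := by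
          calc s * M' ≤ (1/(k:ℝ)) * M' := mul_le_mul_of_nonneg_right hsk hM'0
            _ ≤ 1/2 := by
              rw [div_mul_eq_mul_div, div_le_div_iff₀ hk0 (by norm_num)]
              linarith
        have hLz : 0 ≤ L z := hnonneg z
        have hchain : L z - L ((1 + (i:ℝ)/k) • x) ≤ (1/2) * L z := by
          rw [← hprev]
          calc L z - L ((1-s) • z) ≤ s * dirDeriv L z z := hstep
            _ ≤ s * (M' * L z) := mul_le_mul_of_nonneg_left hdz hs0.le
            _ = (s * M') * L z := by ring
            _ ≤ (1/2) * L z := mul_le_mul_of_nonneg_right hsM hLz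
        have hprev2 := ih hik'
        have hpow : (2:ℝ) ^ (i+1) = 2 * 2 ^ i := by ring
        rw [hpow]
        linarith
    have hfin := key k le_rfl
    have h2 : (1 + (k:ℝ)/k) = 2 := by
      rw [div_self (ne_of_gt hk0)]; norm_num
    rw [h2] at hfin
    exact hfin
  constructor
  · constructor
    · rintro ⟨C, hC⟩
      exact ⟨C - 1, fwd C hC⟩
    · rintro ⟨M, hM⟩
      refine bwd M ?_
      intro x hx
      have := hM x hx
      rw [div_le_iff₀ (hLpos x hx)] at this
      linarith
  · constructor
    · rintro ⟨C, hC⟩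
      refine ⟨C - 1, ?_⟩
      intro x hx y hy
      have hLx := hLpos x hx
      have h1 := hy ((2:ℝ) • x)
      have h2 : (2:ℝ) • x - x = x := by module
      rw [h2] at h1
      have h3 := hC x hx
      rw [div_le_iff₀ hLx, real_inner_comm]
      linarith
    · rintro ⟨M, hM⟩
      refine bwd M ?_
      intro x hx
      have hx0 : x ≠ 0 := by intro h; rw [h, norm_zero] at hx; linarith
      obtain ⟨y, hy, hyx⟩ := exists_subgradient hconv x hx0
      have := hM x hx y hy
      rw [div_le_iff₀ (hLpos x hx)] at this
      rw [← hyx]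
      linarith
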